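/- Let X = Π (n : ℕ), (Fin (2^n) → Fin n → Bool) be equipped with the infinite product μ of the uniform probability measures on each factor. For each n let E_n ⊆ X be the event that there exists i : Fin (2^n) with (x n) i j = true for all j : Fin n. Then μ of the set of points x ∈ X such that both {n ≥ 1 | x ∈ E_n} and {n ≥ 1 | x ∉ E_n} are infinite equals 1. -/
import Mathlib

open MeasureTheory ProbabilityTheory Filter
open scoped ENNReal

lemma tribes_cardCompl (n : ℕ) :
    Nat.card {f : Fin (2^n) → Fin n → Bool // ¬ ∃ i, ∀ j, f i j = true} = (2^n - 1)^(2^n) := by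
  rw [Nat.card_eq_fintype_card]
  have e1 : ∀ f : Fin (2^n) → Fin n → Bool, (¬ ∃ i, ∀ j, f i j = true) ↔ ∀ i, ¬ ∀ j, f i j = true := by
    intro f; push_neg; simp
  have e2 : {f : Fin (2^n) → Fin n → Bool // ¬ ∃ i, ∀ j, f i j = true}
      ≃ ∀ _i : Fin (2^n), {g : Fin n → Bool // ¬ ∀ j, g j = true} :=
    (Equiv.subtypeEquivRight e1).trans
      (Equiv.subtypePiEquivPi (p := fun _i (g : Fin n → Bool) => ¬ ∀ j, g j = true))
  rw [Fintype.card_congr e2, Fintype.card_pi]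
  have h2 : Fintype.card {g : Fin n → Bool // ¬ ∀ j, g j = true} = 2^n - 1 := by
    rw [Fintype.card_subtype_compl]
    have : Fintype.card {g : Fin n → Bool // ∀ j, g j = true} = 1 := by
      rw [Fintype.card_congr (Equiv.subtypeEquivRight (fun g => funext_iff.symm))]
      exact Fintype.card_subtype_eq (fun _ => true)
    simp [this]
  simp only [h2, Finset.prod_const, Finset.card_univ, Fintype.card_fin]

lemma tribes_binom_lb (b k : ℕ) : b^(k+1) + (k+1) * b^k ≤ (b+1)^(k+1) := by
  induction k with
  | zero => simp
  | succ k ih =>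
    have h1 : b^(k+1) = b^k * b := pow_succ b k
    have h2 : b^(k+1+1) = b^(k+1) * b := pow_succ b (k+1)
    calc b^(k+1+1) + (k+1+1) * b^(k+1)
        = b^k*b*b + (k+1+1) * (b^k*b) := by rw [h2, h1]
      _ ≤ (b^k*b + (k+1) * b^k) * (b+1) := by
          have : (b^k*b + (k+1)*b^k)*(b+1) = b^k*b*b + (k+1+1)*(b^k*b) + (k+1)*b^k := by ring
          omega
      _ = (b^(k+1) + (k+1) * b^k) * (b+1) := by rw [h1]
      _ ≤ (b+1)^(k+1) * (b+1) := Nat.mul_le_mul_right _ ih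
      _ = (b+1)^(k+1+1) := (pow_succ _ _).symm

lemma tribes_upper_nat (a : ℕ) (ha : 1 ≤ a) : 2 * (a-1)^a ≤ a^a := by
  obtain ⟨b, rfl⟩ : ∃ b, a = b + 1 := ⟨a - 1, by omega⟩
  simp only [Nat.add_sub_cancel]
  rcases Nat.eq_zero_or_pos b with rfl | hb
  · simp
  have h := tribes_binom_lb b b
  have hb' : b^(b+1) = b^b * b := pow_succ b b
  have hpos : 1 ≤ b^b := Nat.one_le_iff_ne_zero.mpr (pow_ne_zero b (by omega))
  nlinarith

lemma tribes_step_lb (c : ℕ) (ih : (c+1)^(c+1) ≤ 4 * c^(c+1)) :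
    (2*(c+1))^(2*(c+1)) ≤ 4 * (2*c+1)^(2*(c+1)) := by
  have hstep : 4*(c+1)*c ≤ (2*c+1)^2 := by nlinarith
  calc (2*(c+1))^(2*(c+1)) = ((2*(c+1))^2)^(c+1) := by rw [← pow_mul]
    _ = (4 * ((c+1)*(c+1)))^(c+1) := by ring_nf
    _ = 4^(c+1) * ((c+1)^(c+1) * (c+1)^(c+1)) := by rw [mul_pow, mul_pow]
    _ ≤ 4^(c+1) * ((c+1)^(c+1) * (4 * c^(c+1))) := by
        exact Nat.mul_le_mul_left _ (Nat.mul_le_mul_left _ ih)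
    _ = 4 * ((4*(c+1)*c))^(c+1) := by rw [mul_pow, mul_pow]; ring
    _ ≤ 4 * ((2*c+1)^2)^(c+1) := Nat.mul_le_mul_left _ (Nat.pow_le_pow_left hstep _)
    _ = 4 * (2*c+1)^(2*(c+1)) := by rw [← pow_mul]

lemma tribes_lower_nat (n : ℕ) (hn : 1 ≤ n) : (2^n)^(2^n) ≤ 4 * (2^n - 1)^(2^n) := by
  induction n with
  | zero => omega
  | succ m ih =>
    rcases Nat.eq_zero_or_pos m with rfl | hm
    · decide
    have ih' := ih hm
    have ha2 : 2 ≤ 2^m := by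
      calc 2 = 2^1 := rfl
        _ ≤ 2^m := Nat.pow_le_pow_right (by norm_num) hm
    obtain ⟨c, hc⟩ : ∃ c, 2^m = c + 1 := ⟨2^m - 1, by omega⟩
    have e1 : 2^(m+1) = 2*(c+1) := by rw [pow_succ, hc]; ring
    have e2 : 2^(m+1) - 1 = 2*c+1 := by omega
    rw [e2, e1]
    apply tribes_step_lb
    rw [hc] at ih'
    simpa using ih'

lemma tribes_tsum_top (f : ℕ → ℝ≥0∞) (hf : ∀ n, 1 ≤ n → 4⁻¹ ≤ f n) : ∑' n, f n = ⊤ := by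
  refine top_unique ?_
  calc (⊤:ℝ≥0∞) = ∑' _n : ℕ, (4⁻¹:ℝ≥0∞) :=
        (ENNReal.tsum_const_eq_top_of_ne_zero (by norm_num)).symm
    _ ≤ ∑' n : ℕ, f (n+1) := ENNReal.tsum_le_tsum (fun n => hf (n+1) (Nat.succ_le_succ n.zero_le))
    _ ≤ ∑' n, f n := ENNReal.tsum_comp_le_tsum_of_injective Nat.succ_injective f

theorem tribes_infinitely_often_and_infinitely_often_not
    (μ : Measure (Π n : ℕ, Fin (2 ^ n) → Fin n → Bool)) [IsProbabilityMeasure μ]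
    (hμ : ∀ S : Finset ℕ,
      μ.map (fun x => fun n : S => x n)
        = Measure.pi (fun n : S =>
            (PMF.uniformOfFintype (Fin (2 ^ (n : ℕ)) → Fin (n : ℕ) → Bool)).toMeasure)) :
    μ {x : Π n : ℕ, Fin (2 ^ n) → Fin n → Bool |
        {n : ℕ | 1 ≤ n ∧ ∃ i : Fin (2 ^ n), ∀ j : Fin n, x n i j = true}.Infinite ∧
        {n : ℕ | 1 ≤ n ∧ ¬ ∃ i : Fin (2 ^ n), ∀ j : Fin n, x n i j = true}.Infinite} = 1 := by
  classical
  have measAll : ∀ (n : ℕ) (s : Set (Fin (2^n) → Fin n → Bool)), MeasurableSet s :=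
    fun n s => (Set.toFinite s).measurableSet
  -- finite-dimensional marginal computation for coordinate cylinder events
  have key : ∀ (T : ∀ n, Set (Fin (2^n) → Fin n → Bool)) (S : Finset ℕ),
      μ (⋂ n ∈ S, (fun x : Π n : ℕ, Fin (2^n) → Fin n → Bool => x n) ⁻¹' T n)
        = ∏ n ∈ S, (PMF.uniformOfFintype (Fin (2^n) → Fin n → Bool)).toMeasure (T n) := by
    intro T S
    have hbi : (⋂ n ∈ S, (fun x : Π n : ℕ, Fin (2^n) → Fin n → Bool => x n) ⁻¹' T n)
        = (fun x : Π n : ℕ, Fin (2^n) → Fin n → Bool => fun n : S => x n) ⁻¹'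
            (Set.univ.pi fun n : S => T (n : ℕ)) := by
      ext x; simp [Set.mem_pi]
    have hmeas : Measurable (fun x : Π n : ℕ, Fin (2^n) → Fin n → Bool => fun n : S => x n) :=
      measurable_pi_lambda _ fun n => measurable_pi_apply _
    rw [hbi, ← Measure.map_apply hmeas (MeasurableSet.univ_pi fun n => measAll _ _),
      hμ S, Measure.pi_pi]
    exact Finset.prod_coe_sort S fun n =>
      (PMF.uniformOfFintype (Fin (2^n) → Fin n → Bool)).toMeasure (T n)
  have single : ∀ (T : ∀ n, Set (Fin (2^n) → Fin n → Bool)) (n : ℕ),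
      μ ((fun x : Π n : ℕ, Fin (2^n) → Fin n → Bool => x n) ⁻¹' T n)
        = (PMF.uniformOfFintype (Fin (2^n) → Fin n → Bool)).toMeasure (T n) := by
    intro T n
    have := key T {n}
    simpa using this
  have indep : ∀ (T : ∀ n, Set (Fin (2^n) → Fin n → Bool)),
      iIndepSet (fun n => (fun x : Π n : ℕ, Fin (2^n) → Fin n → Bool => x n) ⁻¹' T n) μ := by
    intro T
    rw [iIndepSet_iff_meas_biInter (fun n => (measAll n (T n)).preimage (measurable_pi_apply n))]
    intro S
    rw [key T S]
    exact Finset.prod_congr rfl fun n _ => (single T n).symm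
  -- the tribes events and their complements
  set T : ∀ n : ℕ, Set (Fin (2^n) → Fin n → Bool) :=
    fun n => {f | ∃ i, ∀ j, f i j = true} with hT
  set E : ℕ → Set (Π n : ℕ, Fin (2^n) → Fin n → Bool) :=
    fun n => (fun x : Π n : ℕ, Fin (2^n) → Fin n → Bool => x n) ⁻¹' T n with hE
  have hEmeas : ∀ n, MeasurableSet (E n) :=
    fun n => (measAll n (T n)).preimage (measurable_pi_apply n)
  have hEcompl : ∀ n, (E n)ᶜ = (fun x : Π n : ℕ, Fin (2^n) → Fin n → Bool => x n) ⁻¹' (T n)ᶜ :=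
    fun n => rfl
  -- the numeric value of the complement probability
  have hq : ∀ n : ℕ, μ ((E n)ᶜ)
      = (((2^n - 1)^(2^n) : ℕ) : ℝ≥0∞) / (((2^n)^(2^n) : ℕ) : ℝ≥0∞) := by
    intro n
    rw [hEcompl n, single (fun n => (T n)ᶜ) n,
      PMF.toMeasure_uniformOfFintype_apply _ (measAll _ _)]
    have h1 : Nat.card ((T n)ᶜ : Set (Fin (2^n) → Fin n → Bool)) = (2^n - 1)^(2^n) :=
      (Nat.card_congr (Equiv.subtypeEquivRight fun f => Iff.rfl)).trans (tribes_cardCompl n)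
    have h2 : Nat.card (Fin (2^n) → Fin n → Bool) = (2^n)^(2^n) := by
      simp [Nat.card_eq_fintype_card]
    simp only [← Nat.card_eq_fintype_card]
    rw [h1, h2]
  have hc2ne : ∀ n : ℕ, (((2^n)^(2^n) : ℕ) : ℝ≥0∞) ≠ 0 := by
    intro n
    exact_mod_cast pow_ne_zero _ (pow_ne_zero _ (two_ne_zero))
  -- complement probability bounds for n ≥ 1
  have hq_ub : ∀ n : ℕ, 1 ≤ n → μ ((E n)ᶜ) ≤ 2⁻¹ := by
    intro n hn
    rw [hq n, ENNReal.div_le_iff_le_mul (b := (((2^n)^(2^n) : ℕ) : ℝ≥0∞)) (c := 2⁻¹)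
      (Or.inl (hc2ne n)) (Or.inl (ENNReal.natCast_ne_top _))]
    have hnat : (2:ℝ≥0∞) * (((2^n - 1)^(2^n) : ℕ) : ℝ≥0∞) ≤ (((2^n)^(2^n) : ℕ) : ℝ≥0∞) := by
      exact_mod_cast tribes_upper_nat (2^n) Nat.one_le_two_pow
    calc (((2^n - 1)^(2^n) : ℕ) : ℝ≥0∞)
        = 2⁻¹ * (2 * (((2^n - 1)^(2^n) : ℕ) : ℝ≥0∞)) := by
          rw [← mul_assoc, ENNReal.inv_mul_cancel two_ne_zero ENNReal.ofNat_ne_top, one_mul]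
      _ ≤ 2⁻¹ * (((2^n)^(2^n) : ℕ) : ℝ≥0∞) := mul_le_mul_right hnat _
  have hq_lb : ∀ n : ℕ, 1 ≤ n → 4⁻¹ ≤ μ ((E n)ᶜ) := by
    intro n hn
    rw [hq n, ENNReal.le_div_iff_mul_le (b := (((2^n)^(2^n) : ℕ) : ℝ≥0∞))
      (c := (((2^n - 1)^(2^n) : ℕ) : ℝ≥0∞))
      (Or.inl (hc2ne n)) (Or.inl (ENNReal.natCast_ne_top _))]
    have hnat : (((2^n)^(2^n) : ℕ) : ℝ≥0∞) ≤ 4 * (((2^n - 1)^(2^n) : ℕ) : ℝ≥0∞) := by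
      exact_mod_cast tribes_lower_nat n hn
    calc 4⁻¹ * (((2^n)^(2^n) : ℕ) : ℝ≥0∞)
        ≤ 4⁻¹ * (4 * (((2^n - 1)^(2^n) : ℕ) : ℝ≥0∞)) := mul_le_mul_right hnat _
      _ = (((2^n - 1)^(2^n) : ℕ) : ℝ≥0∞) := by
          rw [← mul_assoc, ENNReal.inv_mul_cancel (by norm_num) (by norm_num), one_mul]
  have hp_lb : ∀ n : ℕ, 1 ≤ n → 4⁻¹ ≤ μ (E n) := by
    intro n hn
    have h1 : μ ((E n)ᶜ) = 1 - μ (E n) := prob_compl_eq_one_sub (hEmeas n)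
    have h2 : 1 - μ (E n) ≤ 2⁻¹ := h1 ▸ hq_ub n hn
    have h3 : (1:ℝ≥0∞) ≤ 2⁻¹ + μ (E n) := tsub_le_iff_right.mp h2
    have h4 : (1:ℝ≥0∞) - 2⁻¹ ≤ μ (E n) := tsub_le_iff_left.mpr h3
    calc (4⁻¹:ℝ≥0∞) ≤ 2⁻¹ := by
          rw [ENNReal.inv_le_inv]; exact_mod_cast (by norm_num : (2:ℝ≥0∞) ≤ 4)
      _ = 1 - 2⁻¹ := ENNReal.one_sub_inv_two.symm
      _ ≤ μ (E n) := h4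
  -- second Borel-Cantelli, twice
  have hBC1 : μ (limsup E atTop) = 1 :=
    measure_limsup_eq_one hEmeas (indep T) (tribes_tsum_top _ hp_lb)
  have hBC2 : μ (limsup (fun n => (E n)ᶜ) atTop) = 1 :=
    measure_limsup_eq_one (fun n => (hEmeas n).compl) (indep fun n => (T n)ᶜ)
      (tribes_tsum_top _ hq_lb)
  -- glue
  have hms : MeasurableSet (limsup E atTop) := MeasurableSet.measurableSet_limsup hEmeas
  have hmt : MeasurableSet (limsup (fun n => (E n)ᶜ) atTop) :=
    MeasurableSet.measurableSet_limsup fun n => (hEmeas n).compl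
  have hinter : μ (limsup E atTop ∩ limsup (fun n => (E n)ᶜ) atTop) = 1 := by
    rw [← prob_compl_eq_zero_iff (hms.inter hmt), Set.compl_inter]
    exact measure_union_null ((prob_compl_eq_zero_iff hms).mpr hBC1)
      ((prob_compl_eq_zero_iff hmt).mpr hBC2)
  have hsub : limsup E atTop ∩ limsup (fun n => (E n)ᶜ) atTop ⊆
      {x : Π n : ℕ, Fin (2^n) → Fin n → Bool |
        {n : ℕ | 1 ≤ n ∧ ∃ i : Fin (2 ^ n), ∀ j : Fin n, x n i j = true}.Infinite ∧
        {n : ℕ | 1 ≤ n ∧ ¬ ∃ i : Fin (2 ^ n), ∀ j : Fin n, x n i j = true}.Infinite} := by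
    rintro x ⟨hx1, hx2⟩
    rw [Filter.mem_limsup_iff_frequently_mem, Nat.frequently_atTop_iff_infinite] at hx1 hx2
    constructor
    · have : {n : ℕ | x ∈ E n} \ {0} ⊆
          {n : ℕ | 1 ≤ n ∧ ∃ i : Fin (2 ^ n), ∀ j : Fin n, x n i j = true} := by
        rintro m ⟨hm1, hm2⟩
        exact ⟨Nat.one_le_iff_ne_zero.mpr (by simpa using hm2), hm1⟩
      exact ((hx1.diff (Set.finite_singleton 0)).mono this)
    · have : {n : ℕ | x ∈ (E n)ᶜ} \ {0} ⊆
          {n : ℕ | 1 ≤ n ∧ ¬ ∃ i : Fin (2 ^ n), ∀ j : Fin n, x n i j = true} := by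
        rintro m ⟨hm1, hm2⟩
        exact ⟨Nat.one_le_iff_ne_zero.mpr (by simpa using hm2), hm1⟩
      exact ((hx2.diff (Set.finite_singleton 0)).mono this)
  refine le_antisymm prob_le_one ?_
  calc (1:ℝ≥0∞) = μ (limsup E atTop ∩ limsup (fun n => (E n)ᶜ) atTop) := hinter.symm
    _ ≤ _ := measure_mono hsub
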